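/- Define for n ∈ ℕ the Laurent polynomial a_n(q) := (−1)^n q^{n(n+3)/2 − 1} Σ_{k=1}^{n+1} q^{k²} [n+k choose 2k−1]_q (the n-th Habiro cyclotomic coefficient of the mirror of the (2,5)-torus knot). Let p ≥ 3 be an odd integer and let e_p be a primitive p-th root of unity in ℂ. Then a_p(e_p) = −2 − Σ_{j=(p+1)/2}^{p−1} e_p^{j² − 1} [j choose 2j−1−p]_{e_p}. -/

import Mathlib

/-- Evaluation at `ζ : ℂ` of the Gaussian binomial coefficient `[n choose k]_q ∈ ℤ[q]`,
defined by the `q`-Pascal recursion, agreeing with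
`∏_{i=1}^{k} (1−q^{n−k+i})/(1−q^i)` for `k ≤ n` and with `0` for `k > n`. -/
def qbinom : ℕ → ℕ → ℂ → ℂ
  | _, 0, _ => 1
  | 0, _ + 1, _ => 0
  | n + 1, k + 1, ζ => qbinom n k ζ + ζ ^ (k + 1) * qbinom n (k + 1) ζ

/-- The `n`-th Habiro cyclotomic coefficient of the mirror of the `(2,5)`-torus knot,
`a_n(q) = (−1)^n q^{n(n+3)/2 − 1} Σ_{k=1}^{n+1} q^{k²} [n+k choose 2k−1]_q`,
evaluated at `ζ ≠ 0`. -/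
noncomputable def aCoef (n : ℕ) (ζ : ℂ) : ℂ :=
  (-1) ^ n * ζ ^ (((n * (n + 3) / 2 : ℕ) : ℤ) - 1) *
    ∑ k ∈ Finset.Icc 1 (n + 1), ζ ^ (k ^ 2) * qbinom (n + k) (2 * k - 1) ζ

lemma qbinom_zero (n : ℕ) (ζ : ℂ) : qbinom n 0 ζ = 1 := by cases n <;> rfl

lemma qbinom_of_lt (ζ : ℂ) : ∀ n k, n < k → qbinom n k ζ = 0 := by
  intro n
  induction n with
  | zero => intro k hk; obtain ⟨m, rfl⟩ := Nat.exists_eq_add_of_lt hk; rfl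
  | succ n ih =>
    intro k hk
    obtain ⟨m, rfl⟩ : ∃ m, k = m + 1 := ⟨k - 1, by omega⟩
    show qbinom n m ζ + ζ ^ (m + 1) * qbinom n (m + 1) ζ = 0
    rw [ih m (by omega), ih (m+1) (by omega)]; ring

lemma qbinom_self (ζ : ℂ) : ∀ n, qbinom n n ζ = 1 := by
  intro n
  induction n with
  | zero => rfl
  | succ n ih =>
    show qbinom n n ζ + ζ ^ (n + 1) * qbinom n (n + 1) ζ = 1
    rw [ih, qbinom_of_lt ζ n (n+1) (by omega)]; ring

lemma qbinom_pred (ζ : ℂ) : ∀ n, qbinom (n + 1) n ζ = ∑ i ∈ Finset.range (n + 1), ζ ^ i := by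
  intro n
  induction n with
  | zero => simp [qbinom]
  | succ n ih =>
    show qbinom (n+1) n ζ + ζ ^ (n + 1) * qbinom (n+1) (n + 1) ζ = _
    rw [ih, qbinom_self, Finset.sum_range_succ, Finset.sum_range_succ, Finset.sum_range_succ]; ring

lemma qbinom_mul (ζ : ℂ) : ∀ n k, k ≤ n →
    qbinom n k ζ * ∏ i ∈ Finset.Icc 1 k, (1 - ζ ^ i) =
      ∏ i ∈ Finset.Icc (n - k + 1) n, (1 - ζ ^ i) := by
  intro n
  induction n with
  | zero =>
    intro k hk
    interval_cases k
    simp [qbinom_zero]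
  | succ n ih =>
    intro k hk
    match k with
    | 0 => simp [qbinom_zero]
    | k + 1 =>
      show (qbinom n k ζ + ζ ^ (k + 1) * qbinom n (k + 1) ζ) * _ = _
      have hIcc : Finset.Icc 1 (k+1) = insert (k+1) (Finset.Icc 1 k) := by
        rw [Finset.insert_Icc_right_eq_Icc_add_one (by omega)]
      rw [hIcc, Finset.prod_insert (by simp)]
      have hR : Finset.Icc (n + 1 - (k+1) + 1) (n+1)
          = insert (n+1) (Finset.Icc (n - k + 1) n) := by
        rw [show n + 1 - (k+1) + 1 = n - k + 1 from by omega,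
          Finset.insert_Icc_right_eq_Icc_add_one (by omega)]
      rw [hR, Finset.prod_insert (by simp)]
      rcases Nat.lt_or_ge k n with hkn | hkn
      · have h1 := ih k (by omega)
        have h2 := ih (k+1) (by omega)
        rw [hIcc, Finset.prod_insert (by simp)] at h2
        have hN : Finset.Icc (n - (k+1) + 1) n = insert (n - k) (Finset.Icc (n - k + 1) n) := by
          rw [show n - (k+1) + 1 = n - k from by omega,
            Finset.insert_Icc_add_one_left_eq_Icc (by omega)]
        rw [hN, Finset.prod_insert (by simp)] at h2
        have hpow : ζ ^ (k+1) * ζ ^ (n-k) = ζ ^ (n+1) := by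
          rw [← pow_add]; congr 1; omega
        linear_combination (1 - ζ^(k+1)) * h1 + ζ^(k+1) * h2
          - (∏ i ∈ Finset.Icc (n - k + 1) n, (1 - ζ ^ i)) * hpow
      · have hk' : k = n := by omega
        subst hk'
        rw [qbinom_of_lt ζ k (k+1) (by omega), qbinom_self]
        rw [show k - k + 1 = 1 from by omega]
        ring

lemma qbinom_succ (n k : ℕ) (ζ : ℂ) :
    qbinom (n + 1) (k + 1) ζ = qbinom n k ζ + ζ ^ (k + 1) * qbinom n (k + 1) ζ := rfl

lemma qbinom_prim {p : ℕ} {e : ℂ} (he : IsPrimitiveRoot e p) {m : ℕ}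
    (hm0 : 0 < m) (hmp : m < p) : qbinom p m e = 0 := by
  have h := qbinom_mul e p m hmp.le
  have hD : ∏ i ∈ Finset.Icc 1 m, (1 - e ^ i) ≠ 0 := by
    rw [Finset.prod_ne_zero_iff]
    intro i hi
    simp only [Finset.mem_Icc] at hi
    have h1 := he.pow_ne_one_of_pos_of_lt (by omega : i ≠ 0) (by omega : i < p)
    intro hc
    exact h1 (by linear_combination -hc)
  have hz : ∏ i ∈ Finset.Icc (p - m + 1) p, (1 - e ^ i) = 0 :=
    Finset.prod_eq_zero (Finset.mem_Icc.mpr ⟨by omega, le_rfl⟩)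
      (by rw [he.pow_eq_one]; ring)
  rw [hz] at h
  exact (mul_eq_zero.mp h).resolve_right hD

lemma lucas {p : ℕ} {e : ℂ} (he : IsPrimitiveRoot e p) : ∀ n, n < p →
    (∀ m, m < p → qbinom (p + n) m e = qbinom n m e) ∧
    (∀ k, k ≤ n → qbinom (p + n) (p + k) e = qbinom n k e) := by
  intro n
  induction n with
  | zero =>
    intro hn
    constructor
    · intro m hm
      match m with
      | 0 => rw [qbinom_zero, qbinom_zero]
      | m + 1 =>
        show qbinom p (m+1) e = qbinom 0 (m+1) e
        rw [qbinom_prim he (by omega) (by omega)]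
        rfl
    · intro k hk
      interval_cases k
      rw [qbinom_self, qbinom_self]
  | succ n ih =>
    intro hn
    have ihn := ih (by omega)
    constructor
    · intro m hm
      match m with
      | 0 => rw [qbinom_zero, qbinom_zero]
      | m + 1 =>
        rw [show p + (n+1) = (p+n) + 1 from rfl, qbinom_succ, qbinom_succ,
          ihn.1 m (by omega), ihn.1 (m+1) hm]
    · intro k hk
      match k with
      | 0 =>
        have h1 : qbinom (p + (n + 1)) (p + 0) e
            = qbinom (p + n) (p - 1) e + e ^ p * qbinom (p + n) p e := by
          rw [show p + 0 = (p-1) + 1 from by omega,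
            show p + (n+1) = (p+n) + 1 from rfl, qbinom_succ,
            show (p-1) + 1 = p from by omega]
        have h3 : qbinom (p+n) p e = qbinom n 0 e := ihn.2 0 (by omega)
        rw [h1, ihn.1 (p-1) (by omega), qbinom_of_lt e n (p-1) (by omega),
          h3, he.pow_eq_one, qbinom_zero, qbinom_zero]
        ring
      | k + 1 =>
        have h2 : qbinom (p + n) (p + (k + 1)) e = qbinom n (k + 1) e := by
          rcases Nat.lt_or_ge k n with h | h
          · exact ihn.2 (k+1) (by omega)
          · have hk' : k = n := by omega
            subst hk'
            rw [qbinom_of_lt e (p+k) (p+(k+1)) (by omega),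
              qbinom_of_lt e k (k+1) (by omega)]
        rw [show p + (n+1) = (p+n) + 1 from rfl,
          show p + (k+1) = (p+k) + 1 from rfl, qbinom_succ, qbinom_succ,
          show p + k + 1 = p + (k+1) from rfl,
          ihn.2 k (by omega), h2,
          show e ^ (p + (k+1)) = e ^ p * e ^ (k+1) from pow_add e p (k+1),
          he.pow_eq_one, one_mul]

theorem stmt17 (p : ℕ) (hp : 3 ≤ p) (hodd : Odd p) (e : ℂ) (he : IsPrimitiveRoot e p) :
    aCoef p e =
      -2 - ∑ j ∈ Finset.Icc ((p + 1) / 2) (p - 1),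
        e ^ (j ^ 2 - 1) * qbinom j (2 * j - 1 - p) e := by
  obtain ⟨m, hm⟩ := hodd
  replace hm : p = 2 * m + 1 := by omega
  subst hm
  have hm1 : 1 ≤ m := by omega
  have he1 : e ^ (2 * m + 1) = 1 := he.pow_eq_one
  have hene : e ≠ 0 := he.ne_zero (by omega)
  rw [aCoef, Odd.neg_one_pow ⟨m, by ring⟩]
  have hNat : (2*m+1) * (2*m+1+3) / 2 = (2*m+1)*(m+2) := by
    rw [show (2*m+1)*(2*m+1+3) = ((2*m+1)*(m+2))*2 from by ring]
    exact Nat.mul_div_cancel _ (by norm_num)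
  have hexp : e ^ ((((2*m+1) * (2*m+1+3) / 2 : ℕ) : ℤ) - 1) = e⁻¹ := by
    rw [hNat, zpow_sub₀ hene, zpow_one, zpow_natCast, pow_mul, he1, one_pow, one_div]
  rw [hexp]
  have hIoc : Finset.Icc 1 (2*m+1+1) = Finset.Ioc 0 (2*m+1+1) := by
    ext x; simp only [Finset.mem_Icc, Finset.mem_Ioc]; omega
  rw [hIoc]
  rw [← Finset.sum_Ioc_consecutive _ (show (0:ℕ) ≤ 1 by omega) (show (1:ℕ) ≤ 2*m+1+1 by omega)]
  rw [← Finset.sum_Ioc_consecutive _ (show (1:ℕ) ≤ m by omega) (show m ≤ 2*m+1+1 by omega)]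
  rw [← Finset.sum_Ioc_consecutive _ (show m ≤ 2*m by omega) (show 2*m ≤ 2*m+1+1 by omega)]
  have hA : ∑ k ∈ Finset.Ioc 0 1, e ^ (k^2) * qbinom (2*m+1+k) (2*k-1) e = e := by
    rw [Nat.Ioc_succ_singleton, Finset.sum_singleton]
    have h : qbinom (2*m+1+1) 1 e = qbinom 1 1 e := (lucas he 1 (by omega)).1 1 (by omega)
    rw [show 2*1-1 = 1 from by omega, h, qbinom_self]
    norm_num
  have hB : ∑ k ∈ Finset.Ioc 1 m, e ^ (k^2) * qbinom (2*m+1+k) (2*k-1) e = 0 := by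
    apply Finset.sum_eq_zero
    intro k hk
    simp only [Finset.mem_Ioc] at hk
    have h : qbinom (2*m+1+k) (2*k-1) e = qbinom k (2*k-1) e :=
      (lucas he k (by omega)).1 (2*k-1) (by omega)
    rw [h, qbinom_of_lt e k (2*k-1) (by omega), mul_zero]
  have hC : ∑ k ∈ Finset.Ioc m (2*m), e ^ (k^2) * qbinom (2*m+1+k) (2*k-1) e
      = ∑ k ∈ Finset.Ioc m (2*m), e ^ (k^2) * qbinom k (2*k-1-(2*m+1)) e := by
    apply Finset.sum_congr rfl
    intro k hk
    simp only [Finset.mem_Ioc] at hk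
    have h : qbinom (2*m+1+k) (2*m+1 + (2*k-1-(2*m+1))) e = qbinom k (2*k-1-(2*m+1)) e :=
      (lucas he k (by omega)).2 (2*k-1-(2*m+1)) (by omega)
    conv_lhs => rw [show 2*k-1 = (2*m+1) + (2*k-1-(2*m+1)) from by omega]
    rw [h]
  have hD : ∑ k ∈ Finset.Ioc (2*m) (2*m+1+1), e ^ (k^2) * qbinom (2*m+1+k) (2*k-1) e = e := by
    rw [Finset.sum_Ioc_succ_top (by omega), Finset.sum_Ioc_succ_top (by omega),
      Finset.Ioc_self, Finset.sum_empty]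
    have h1 : qbinom (2*m+1+(2*m+1)) (2*(2*m+1)-1) e = 0 := by
      rw [show 2*m+1+(2*m+1) = (4*m+1)+1 from by omega,
        show 2*(2*m+1)-1 = 4*m+1 from by omega, qbinom_pred,
        geom_sum_eq (he.ne_one (by omega)) (4*m+1+1),
        show 4*m+1+1 = (2*m+1)*2 from by ring, pow_mul, he1, one_pow]
      norm_num
    have h2 : qbinom (2*m+1+(2*m+1+1)) (2*(2*m+1+1)-1) e = 1 := by
      rw [show 2*m+1+(2*m+1+1) = 4*m+3 from by omega,
        show 2*(2*m+1+1)-1 = 4*m+3 from by omega, qbinom_self]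
    rw [h1, h2, show ((2*m+1+1)^2 : ℕ) = (2*m+1)*(2*m+3)+1 from by ring,
      pow_add, pow_mul, he1, one_pow, pow_one]
    ring
  rw [hA, hB, hC, hD]
  rw [show (2*m+1+1)/2 = m+1 from by omega, show 2*m+1-1 = 2*m from by omega]
  have hIccIoc : Finset.Icc (m+1) (2*m) = Finset.Ioc m (2*m) := by
    ext x; simp only [Finset.mem_Icc, Finset.mem_Ioc]; omega
  rw [hIccIoc]
  have hCT : ∑ k ∈ Finset.Ioc m (2*m), e ^ (k^2) * qbinom k (2*k-1-(2*m+1)) e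
      = e * ∑ k ∈ Finset.Ioc m (2*m), e ^ (k^2-1) * qbinom k (2*k-1-(2*m+1)) e := by
    rw [Finset.mul_sum]
    apply Finset.sum_congr rfl
    intro j hj
    simp only [Finset.mem_Ioc] at hj
    have h1 : 1 ≤ j^2 := by nlinarith
    rw [← mul_assoc, show e * e ^ (j^2-1) = e ^ (j^2-1) * e from by ring, ← pow_succ,
      Nat.sub_add_cancel h1]
  rw [hCT]
  field_simp
  ring
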